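/- arXiv:1304.3264 — 2 statements merged into one kernel-verified Lean document; each statement's English description precedes it below -/
import Mathlib

section
/- Let T be a Calderón–Zygmund operator on ℝⁿ with kernel K satisfying |K(x, x + t u)| ≥ c·t^{−n} for some fixed unit vector u, all x ∈ ℝⁿ, and all t ≠ 0, together with the regularity estimate |K(x,s) − K(x,t)| ≤ C_K|s−t|^γ/|x−s|^{n+γ} for |x−s| > 2|s−t|. Then there exists s > 0 such that T is nondegenerate along the direction x₀ = s·u: there is c′ > 0 such that for every ball B of radius r centered anywhere and every nonnegative locally summable f supported on B, |Tf(x)| ≥ c′·f_B for all x ∈ B ± r x₀. -/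
open MeasureTheory Metric Filter
open scoped ENNReal Topology

noncomputable section

/-- Euclidean space `ℝⁿ` (as a pi type, with Lebesgue measure). -/
abbrev En (n : ℕ) : Type := Fin n → ℝ

/-- Average of `w` over the ball `B(c,r)` with respect to Lebesgue measure. -/
def ballAvg {n : ℕ} (w : En n → ℝ) (c : En n) (r : ℝ) : ℝ :=
  ⨍ y in Metric.ball c r, w y

/-- The (uncentered) Hardy–Littlewood maximal operator: supremum of the averages of `|f|`
over all balls containing `x`. -/
def MHL {n : ℕ} (f : En n → ℝ) (x : En n) : ℝ :=
  ⨆ B : {cr : En n × ℝ // 0 < cr.2 ∧ x ∈ Metric.ball cr.1 cr.2},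
    ⨍ y in Metric.ball B.1.1 B.1.2, |f y|

/-- The Muckenhoupt class `A₁` with constant `C`: `M w ≤ C·w` almost everywhere. -/
def IsA1 {n : ℕ} (w : En n → ℝ) (C : ℝ) : Prop :=
  ∀ᵐ x ∂(volume : Measure (En n)), MHL w x ≤ C * w x

/-- The Muckenhoupt class `A_p` (`1 < p < ∞`) with constant `C`:
`sup_B (avg_B w) · (avg_B w^{-1/(p-1)})^{p-1} ≤ C`. -/
def IsAp {n : ℕ} (w : En n → ℝ) (p C : ℝ) : Prop :=
  ∀ (c : En n) (r : ℝ), 0 < r →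
    ballAvg w c r * (ballAvg (fun y => w y ^ (-1 / (p - 1))) c r) ^ (p - 1) ≤ C

/-- `T` is nondegenerate along the direction `x₀` with constant `c`: for every ball
`B = B(z,r)` and every nonnegative locally summable `f` supported on `B`,
`|Tf(x)| ≥ c·f_B` for all `x ∈ B ± r·x₀`. -/
def NondegAlong {n : ℕ} (T : (En n → ℝ) → (En n → ℝ)) (x₀ : En n) (c : ℝ) : Prop :=
  ∀ (z : En n) (r : ℝ), 0 < r → ∀ f : En n → ℝ, (∀ x, 0 ≤ f x) →
    LocallyIntegrable f volume → (∀ x, x ∉ Metric.ball z r → f x = 0) →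
    ∀ x : En n,
      (x ∈ Metric.ball (z + r • x₀) r ∨ x ∈ Metric.ball (z - r • x₀) r) →
      c * ballAvg f z r ≤ |T f x|

/-- The kernel `K x ·` is continuous away from `x`, thanks to the regularity estimate. -/
lemma kernel_contOn {n : ℕ} (K : En n → En n → ℝ) (C_K γ : ℝ) (hγ : 0 < γ)
    (hreg : ∀ x s t : En n, dist x s > 2 * dist s t →
      |K x s - K x t| ≤ C_K * dist s t ^ γ / dist x s ^ ((n : ℝ) + γ))
    (x : En n) : ContinuousOn (K x) {x}ᶜ := by
  intro y hy
  have hne : y ≠ x := hy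
  have hxy : 0 < dist x y := dist_pos.2 (Ne.symm hne)
  apply ContinuousAt.continuousWithinAt
  have h0 : Tendsto (fun t => K x t - K x y) (𝓝 y) (𝓝 0) := by
    apply squeeze_zero_norm'
      (a := fun t => |C_K| * dist y t ^ γ / dist x y ^ ((n : ℝ) + γ))
    · filter_upwards [Metric.ball_mem_nhds y (half_pos hxy)] with t ht
      have hdyt : dist y t < dist x y / 2 := by rw [dist_comm]; exact mem_ball.1 ht
      have hb := hreg x y t (by linarith)
      have habs : |K x t - K x y| = |K x y - K x t| := abs_sub_comm _ _
      rw [Real.norm_eq_abs, habs]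
      refine hb.trans ?_
      have hD : 0 < dist x y ^ ((n : ℝ) + γ) := Real.rpow_pos_of_pos hxy _
      have hd : (0:ℝ) ≤ dist y t ^ γ := Real.rpow_nonneg dist_nonneg _
      gcongr
      exact le_abs_self C_K
    · have h1 : Tendsto (fun t => dist y t) (𝓝 y) (𝓝 0) := by
        simpa using ((continuous_const.dist continuous_id).tendsto y : Tendsto (fun t => dist y t) (𝓝 y) (𝓝 (dist y y)))
      have h2 : Tendsto (fun d : ℝ => d ^ γ) (𝓝 0) (𝓝 0) := by
        have := (Real.continuousAt_rpow_const 0 γ (Or.inr hγ.le)).tendsto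
        simpa [Real.zero_rpow hγ.ne'] using this
      have := ((h2.comp h1).const_mul |C_K|).div_const (dist x y ^ ((n : ℝ) + γ))
      simpa using this
  have := h0.add_const (K x y)
  simpa [ContinuousAt] using this
/-- If a Calderón–Zygmund operator `T` on `ℝⁿ` has a kernel `K` satisfying the lower bound
`|K(x, x + t·u)| ≥ c·|t|^{-n}` along a unit direction `u`, together with the regularity
estimate `|K(x,s) − K(x,t)| ≤ C_K·|s−t|^γ/|x−s|^{n+γ}` for `|x−s| > 2|s−t|`, then `T` is
nondegenerate along the direction `x₀ = s·u` for some `s > 0`. -/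
theorem stmt13 (n : ℕ) (T : (En n → ℝ) → (En n → ℝ)) (K : En n → En n → ℝ)
    (u : En n) (hu : ‖u‖ = 1) (c C_K γ : ℝ) (hc : 0 < c) (hγ : 0 < γ)
    (hlow : ∀ (x : En n) (t : ℝ), t ≠ 0 → c * |t| ^ (-(n : ℝ)) ≤ |K x (x + t • u)|)
    (hreg : ∀ x s t : En n, dist x s > 2 * dist s t →
      |K x s - K x t| ≤ C_K * dist s t ^ γ / dist x s ^ ((n : ℝ) + γ))
    (hrep : ∀ f : En n → ℝ, LocallyIntegrable f volume → ∀ x : En n,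
      (∃ ε > 0, ∀ y, dist x y < ε → f y = 0) → T f x = ∫ y, K x y * f y) :
    ∃ s : ℝ, 0 < s ∧ ∃ c' : ℝ, 0 < c' ∧ NondegAlong T (s • u) c' := by
  -- the case `n = 0` is impossible since `‖u‖ = 1`
  rcases Nat.eq_zero_or_pos n with hn | hn
  · subst hn
    have hu0 : u = 0 := Subsingleton.elim u 0
    rw [hu0, norm_zero] at hu; norm_num at hu
  haveI : Nonempty (Fin n) := ⟨⟨0, hn⟩⟩
  set A : ℝ := max C_K 0 with hAdef
  have hA0 : (0:ℝ) ≤ A := le_max_right _ _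
  have hCA : C_K ≤ A := le_max_left _ _
  set B : ℝ := 2 * A * 2 ^ γ / c with hBdef
  have hB0 : (0:ℝ) ≤ B :=
    div_nonneg (mul_nonneg (by linarith) (Real.rpow_nonneg (by norm_num) _)) hc.le
  set s : ℝ := max 5 (B ^ γ⁻¹ + 1) with hsdef
  have hs5 : (5:ℝ) ≤ s := le_max_left _ _
  have hs0 : (0:ℝ) < s := by linarith
  have hsγ : (0:ℝ) < s ^ γ := Real.rpow_pos_of_pos hs0 _
  have hkey : A * 2 ^ γ / s ^ γ ≤ c / 2 := by
    have h1 : B ^ γ⁻¹ < s := lt_of_lt_of_le (lt_add_one _) (le_max_right _ _)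
    have h2 : B ≤ s ^ γ := by
      have h3 := Real.rpow_le_rpow (Real.rpow_nonneg hB0 _) h1.le hγ.le
      rwa [Real.rpow_inv_rpow hB0 hγ.ne'] at h3
    rw [div_le_iff₀ hsγ]
    have h4 : A * 2 ^ γ = c / 2 * B := by
      rw [hBdef]; field_simp
    rw [h4]
    exact mul_le_mul_of_nonneg_left h2 (by linarith)
  refine ⟨s, hs0, ?_⟩
  set V1 : ℝ := (volume (ball (0 : En n) 1)).toReal with hV1def
  have hV1pos : 0 < V1 :=
    ENNReal.toReal_pos (measure_ball_pos volume 0 one_pos).ne' measure_ball_lt_top.ne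
  refine ⟨c / 2 * s ^ (-(n:ℝ)) * V1,
    mul_pos (mul_pos (by linarith) (Real.rpow_pos_of_pos hs0 _)) hV1pos, ?_⟩
  intro z r hr f hf0 hfloc hsupp x hx
  have hrs : 0 < r * s := mul_pos hr hs0
  have hrs5 : 5 * r ≤ r * s := by nlinarith
  -- locate `x` relative to the ball
  have hxz' : ∀ v : En n, ‖v‖ = r * s → x ∈ ball (z + v) r → 4 * r < dist x z := by
    intro v hv hxv
    have h1 : dist (z + v) z = r * s := by
      rw [dist_eq_norm]; simpa using hv
    have h2 := dist_triangle (z + v) x z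
    have h3 : dist (z + v) x < r := by rw [dist_comm]; exact mem_ball.1 hxv
    linarith
  have hsm : r • (s • u) = (r * s) • u := smul_smul r s u
  obtain ⟨t₀, ht₀, hy0mem, hfar⟩ :
      ∃ t₀ : ℝ, |t₀| = r * s ∧ x + t₀ • u ∈ ball z r ∧ 4 * r < dist x z := by
    rcases hx with h | h
    · rw [hsm] at h
      refine ⟨-(r * s), by rw [abs_neg, abs_of_pos hrs], ?_, ?_⟩
      · have he : x + (-(r * s)) • u = x - (r * s) • u := by
          rw [neg_smul, sub_eq_add_neg]
        rw [he, mem_ball, dist_eq_norm]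
        have he2 : x - (r * s) • u - z = x - (z + (r * s) • u) := by abel
        rw [he2, ← dist_eq_norm]
        exact mem_ball.1 h
      · refine hxz' ((r * s) • u) ?_ h
        rw [norm_smul, hu, Real.norm_eq_abs, abs_of_pos hrs, mul_one]
    · rw [hsm] at h
      refine ⟨r * s, abs_of_pos hrs, ?_, ?_⟩
      · rw [mem_ball, dist_eq_norm]
        have he2 : x + (r * s) • u - z = x - (z - (r * s) • u) := by abel
        rw [he2, ← dist_eq_norm]
        exact mem_ball.1 h
      · refine hxz' (-((r * s) • u)) ?_ ?_
        · rw [norm_neg, norm_smul, hu, Real.norm_eq_abs, abs_of_pos hrs, mul_one]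
        · have he3 : z + -((r * s) • u) = z - (r * s) • u := by abel
          rw [he3]; exact h
  set y0 : En n := x + t₀ • u with hy0def
  have ht₀ne : t₀ ≠ 0 := by
    intro h0; rw [h0, abs_zero] at ht₀; linarith
  have hdxy0 : dist x y0 = r * s := by
    rw [hy0def, dist_eq_norm]
    have he : x - (x + t₀ • u) = -(t₀ • u) := by abel
    rw [he, norm_neg, norm_smul, hu, mul_one, Real.norm_eq_abs, ht₀]
  have hKlow : c * (r * s) ^ (-(n:ℝ)) ≤ |K x y0| := by
    have h := hlow x t₀ ht₀ne
    rwa [ht₀] at h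
  -- f vanishes near x
  have hvan : ∀ y, dist x y < r → f y = 0 := by
    intro y hy
    apply hsupp
    intro hyb
    have h1 : dist y z < r := mem_ball.1 hyb
    have h2 := dist_triangle x y z
    linarith
  -- integrability of f
  have hind : (ball z r).indicator f = f := by
    funext y; by_cases hy : y ∈ ball z r
    · simp [hy]
    · simp [hy, hsupp y hy]
  have hfion : IntegrableOn f (ball z r) volume :=
    (hfloc.integrableOn_isCompact (isCompact_closedBall z r)).mono_set ball_subset_closedBall
  have hfint : Integrable f volume := by
    rw [← hind]; exact hfion.integrable_indicator measurableSet_ball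
  set I : ℝ := ∫ y, f y with hIdef
  have hI0 : 0 ≤ I := integral_nonneg hf0
  -- a.e.-measurability of K x
  have hsing : volume ({x} : Set (En n)) = 0 := measure_singleton x
  have hKae : AEMeasurable (K x) volume := by
    have h1 : AEMeasurable (K x) (volume.restrict {x}ᶜ) :=
      (kernel_contOn K C_K γ hγ hreg x).aemeasurable (measurableSet_singleton x).compl
    rwa [Measure.restrict_congr_set (ae_eq_univ.2 (by rwa [compl_compl])),
      Measure.restrict_univ] at h1
  set M : ℝ := A * (2 * r) ^ γ / (r * s) ^ ((n:ℝ) + γ) with hMdef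
  have hDpos : (0:ℝ) < (r * s) ^ ((n:ℝ) + γ) := Real.rpow_pos_of_pos hrs _
  have hM0 : 0 ≤ M :=
    div_nonneg (mul_nonneg hA0 (Real.rpow_nonneg (by linarith) _)) hDpos.le
  have hEb : ∀ y, |(K x y - K x y0) * f y| ≤ M * f y := by
    intro y
    by_cases hy : y ∈ ball z r
    · have hd1 : dist y0 y < 2 * r := by
        have ht := dist_triangle y0 z y
        have h1 : dist y0 z < r := mem_ball.1 hy0mem
        have h2 : dist z y < r := by rw [dist_comm]; exact mem_ball.1 hy
        linarith
      have hcond : dist x y0 > 2 * dist y0 y := by rw [hdxy0]; linarith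
      have hb := hreg x y0 y hcond
      rw [hdxy0] at hb
      have hKd : |K x y0 - K x y| ≤ M := by
        refine hb.trans ?_
        rw [hMdef]
        apply div_le_div_of_nonneg_right ?_ hDpos.le
        calc C_K * dist y0 y ^ γ ≤ A * dist y0 y ^ γ :=
              mul_le_mul_of_nonneg_right hCA (Real.rpow_nonneg dist_nonneg _)
          _ ≤ A * (2 * r) ^ γ :=
              mul_le_mul_of_nonneg_left (Real.rpow_le_rpow dist_nonneg hd1.le hγ.le) hA0
      rw [abs_mul, abs_of_nonneg (hf0 y), abs_sub_comm]
      exact mul_le_mul_of_nonneg_right hKd (hf0 y)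
    · rw [hsupp y hy]; simp
  have hEint : Integrable (fun y => (K x y - K x y0) * f y) volume := by
    apply Integrable.mono' (hfint.const_mul M)
    · exact ((hKae.sub aemeasurable_const).mul hfint.aemeasurable).aestronglyMeasurable
    · exact ae_of_all _ fun y => by rw [Real.norm_eq_abs]; exact hEb y
  have hTf : T f x = K x y0 * I + ∫ y, (K x y - K x y0) * f y := by
    rw [hrep f hfloc x ⟨r, hr, hvan⟩]
    have hsplit : (fun y => K x y * f y)
        = fun y => K x y0 * f y + (K x y - K x y0) * f y := by
      funext y; ring
    rw [hsplit, integral_add (hfint.const_mul _) hEint, integral_const_mul]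
  have hEI : |∫ y, (K x y - K x y0) * f y| ≤ M * I := by
    calc |∫ y, (K x y - K x y0) * f y| ≤ ∫ y, |(K x y - K x y0) * f y| := by
          simpa only [Real.norm_eq_abs] using
            norm_integral_le_integral_norm (μ := volume) (fun y => (K x y - K x y0) * f y)
      _ ≤ ∫ y, M * f y := integral_mono hEint.abs (hfint.const_mul M) hEb
      _ = M * I := integral_const_mul M f
  have hMle : M ≤ c / 2 * (r * s) ^ (-(n:ℝ)) := by
    have h1 : M = A * 2 ^ γ / s ^ γ * (r * s) ^ (-(n:ℝ)) := by
      rw [hMdef, Real.rpow_add hrs, Real.mul_rpow (by norm_num : (0:ℝ) ≤ 2) hr.le,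
        Real.mul_rpow hr.le hs0.le, Real.rpow_neg hrs.le]
      have h2 : (0:ℝ) < r ^ γ := Real.rpow_pos_of_pos hr _
      have h4 : (0:ℝ) < (r * s) ^ (n:ℝ) := Real.rpow_pos_of_pos hrs _
      field_simp
      rw [Real.mul_rpow hr.le hs0.le, Real.mul_rpow hr.le hs0.le]
      ring
    rw [h1]
    exact mul_le_mul_of_nonneg_right hkey (Real.rpow_nonneg hrs.le _)
  have habs : c / 2 * (r * s) ^ (-(n:ℝ)) * I ≤ |T f x| := by
    rw [hTf]
    set E : ℝ := ∫ y, (K x y - K x y0) * f y with hEdef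
    have h1 : |K x y0| * I - |E| ≤ |K x y0 * I + E| := by
      have h := abs_add_le (K x y0 * I + E) (-E)
      have he : K x y0 * I + E + -E = K x y0 * I := by ring
      rw [he, abs_neg] at h
      have h2 : |K x y0 * I| = |K x y0| * I := by rw [abs_mul, abs_of_nonneg hI0]
      linarith
    have h3 : c * (r * s) ^ (-(n:ℝ)) * I ≤ |K x y0| * I :=
      mul_le_mul_of_nonneg_right hKlow hI0
    have h4 : |E| ≤ c / 2 * (r * s) ^ (-(n:ℝ)) * I :=
      hEI.trans (mul_le_mul_of_nonneg_right hMle hI0)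
    linarith
  -- compute the average
  have hvol : (volume (ball z r)).toReal = r ^ n * V1 := by
    haveI : Nontrivial (En n) := ⟨⟨0, 1, fun h => zero_ne_one (congrFun h ⟨0, hn⟩)⟩⟩
    rw [Measure.addHaar_ball volume z hr.le, ENNReal.toReal_mul,
      ENNReal.toReal_ofReal (pow_nonneg hr.le _)]
    rw [Module.finrank_fin_fun]
  have hIball : ∫ y in ball z r, f y = I := by
    rw [hIdef]
    exact setIntegral_eq_integral_of_forall_compl_eq_zero fun y hy => hsupp y hy
  have havg : ballAvg f z r = (r ^ n * V1)⁻¹ * I := by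
    rw [ballAvg, setAverage_eq, measureReal_def, hvol, smul_eq_mul, hIball]
  rw [havg]
  have hrn : (0:ℝ) < r ^ n := pow_pos hr n
  have hpow : c / 2 * s ^ (-(n:ℝ)) * V1 * ((r ^ n * V1)⁻¹ * I)
      = c / 2 * (r * s) ^ (-(n:ℝ)) * I := by
    have h1 : (r * s) ^ (-(n:ℝ)) = (r ^ n : ℝ)⁻¹ * s ^ (-(n:ℝ)) := by
      rw [Real.rpow_neg hrs.le, Real.mul_rpow hr.le hs0.le, mul_inv,
        Real.rpow_natCast, Real.rpow_neg hs0.le]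
    rw [h1]
    field_simp
  rw [hpow]
  exact habs
end
end

section
/- Let X be a Banach lattice on ℝⁿ with the Fatou property in which a linear operator T nondegenerate along a direction is bounded. Then the averaging operators A_S f = Σ_{Q∈S} f_Q χ_Q over pairwise disjoint collections S of balls are uniformly bounded on X (with bound independent of S). -/
open MeasureTheory Metric Filter
open scoped ENNReal Topology

noncomputable section

variable {α : Type*} [MeasurableSpace α]

/-- A Banach lattice of measurable functions on `(α, μ)`: an ideal space of measurable
functions with a monotone norm. -/
structure BLat (α : Type*) [MeasurableSpace α] (μ : MeasureTheory.Measure α) where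
  Mem : (α → ℝ) → Prop
  nrm : (α → ℝ) → ℝ
  aemeasurable_of_mem : ∀ f, Mem f → AEMeasurable f μ
  ideal : ∀ f g, AEMeasurable f μ → Mem g → (∀ᵐ x ∂μ, |f x| ≤ |g x|) → Mem f
  nrm_mono : ∀ f g, Mem f → Mem g → (∀ᵐ x ∂μ, |f x| ≤ |g x|) → nrm f ≤ nrm g
  nrm_nonneg : ∀ f, 0 ≤ nrm f
  add_mem : ∀ f g, Mem f → Mem g → Mem (f + g)
  nrm_triangle : ∀ f g, Mem f → Mem g → nrm (f + g) ≤ nrm f + nrm g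
  smul_mem : ∀ (a : ℝ) (f), Mem f → Mem (fun x => a * f x)
  nrm_smul : ∀ (a : ℝ) (f), nrm (fun x => a * f x) = |a| * nrm f

/-- A quasi-normed lattice of measurable functions on `(α, μ)`, with quasi-triangle
constant `κ`. -/
structure QLat (α : Type*) [MeasurableSpace α] (μ : MeasureTheory.Measure α) where
  Mem : (α → ℝ) → Prop
  nrm : (α → ℝ) → ℝ
  κ : ℝ
  one_le_κ : 1 ≤ κ
  aemeasurable_of_mem : ∀ f, Mem f → AEMeasurable f μ
  ideal : ∀ f g, AEMeasurable f μ → Mem g → (∀ᵐ x ∂μ, |f x| ≤ |g x|) → Mem f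
  nrm_mono : ∀ f g, Mem f → Mem g → (∀ᵐ x ∂μ, |f x| ≤ |g x|) → nrm f ≤ nrm g
  nrm_nonneg : ∀ f, 0 ≤ nrm f
  add_mem : ∀ f g, Mem f → Mem g → Mem (f + g)
  nrm_qtriangle : ∀ f g, Mem f → Mem g → nrm (f + g) ≤ κ * (nrm f + nrm g)
  smul_mem : ∀ (a : ℝ) (f), Mem f → Mem (fun x => a * f x)
  nrm_smul : ∀ (a : ℝ) (f), nrm (fun x => a * f x) = |a| * nrm f

/-- The Fatou property for a (quasi-)normed lattice of measurable functions given by its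
membership predicate and its norm. -/
def FatouRaw (μ : MeasureTheory.Measure α) (Mem : (α → ℝ) → Prop)
    (nrm : (α → ℝ) → ℝ) : Prop :=
  ∀ (F : ℕ → α → ℝ) (f : α → ℝ), (∀ k, Mem (F k)) → (∀ k, nrm (F k) ≤ 1) →
    (∀ᵐ x ∂μ, Tendsto (fun k => F k x) atTop (𝓝 (f x))) → Mem f ∧ nrm f ≤ 1

/-- Order continuity of the norm: if `F k ↓ 0` a.e. then `‖F k‖ → 0`. -/
def OrderContRaw (μ : MeasureTheory.Measure α) (Mem : (α → ℝ) → Prop)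
    (nrm : (α → ℝ) → ℝ) : Prop :=
  ∀ F : ℕ → α → ℝ, (∀ k, Mem (F k)) →
    (∀ᵐ x ∂μ, Antitone (fun k => F k x) ∧
      Tendsto (fun k => F k x) atTop (𝓝 (0 : ℝ))) →
    Tendsto (fun k => nrm (F k)) atTop (𝓝 (0 : ℝ))

/-- Membership in the order dual `X′`: `g` induces a bounded integral functional on `X`. -/
def DualMem (μ : MeasureTheory.Measure α) (Mem : (α → ℝ) → Prop)
    (nrm : (α → ℝ) → ℝ) (g : α → ℝ) : Prop :=
  AEMeasurable g μ ∧ ∃ C : ℝ, ∀ f, Mem f → nrm f ≤ 1 →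
    ∫⁻ x, ENNReal.ofReal (|f x * g x|) ∂μ ≤ ENNReal.ofReal C

/-- The order dual norm: `‖g‖_{X′} = sup {∫|fg| : f ∈ X, ‖f‖_X ≤ 1}`. -/
def DualNrm (μ : MeasureTheory.Measure α) (Mem : (α → ℝ) → Prop)
    (nrm : (α → ℝ) → ℝ) (g : α → ℝ) : ℝ :=
  (⨆ f : {f : α → ℝ // Mem f ∧ nrm f ≤ 1},
    ∫⁻ x, ENNReal.ofReal (|f.1 x * g x|) ∂μ).toReal

/-- The averaging operator associated with a countable collection of balls
`Q_l = B(z l, ρ l)`: `A_S f = Σ_l f_{Q_l}·χ_{Q_l}`. -/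
def AvgOp {n : ℕ} (z : ℕ → En n) (ρ : ℕ → ℝ) (f : En n → ℝ) (x : En n) : ℝ :=
  ∑' l : ℕ, ballAvg f (z l) (ρ l) *
    Set.indicator (Metric.ball (z l) (ρ l)) (fun _ => (1 : ℝ)) x

lemma key_sign (I : Finset ℕ) (b : ℕ → ℝ) {j : ℕ} (hj : j ∈ I) :
    |b j| ≤ (2 ^ I.card : ℝ)⁻¹ *
      ∑ ε ∈ I.powerset, |∑ l ∈ I, (if l ∈ ε then (1:ℝ) else -1) * b l| := by
  classical
  set s : Finset ℕ → ℕ → ℝ := fun ε l => if l ∈ ε then (1:ℝ) else -1 with hs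
  set S : Finset ℕ → ℝ := fun ε => ∑ l ∈ I, s ε l * b l with hS
  set tog : Finset ℕ → Finset ℕ := fun ε => if j ∈ ε then ε.erase j else insert j ε with htog
  have htog_mem : ∀ ε ∈ I.powerset, tog ε ∈ I.powerset := by
    intro ε hε
    rw [Finset.mem_powerset] at hε ⊢
    by_cases h : j ∈ ε <;> simp only [htog, h, if_true, if_false]
    · exact (Finset.erase_subset _ _).trans hε
    · exact Finset.insert_subset hj hε
  have htog_tog : ∀ ε, tog (tog ε) = ε := by
    intro ε
    by_cases h : j ∈ ε <;> simp only [htog, h, if_true, if_false]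
    · rw [if_neg (Finset.notMem_erase j ε), Finset.insert_erase h]
    · rw [if_pos (Finset.mem_insert_self j ε), Finset.erase_insert h]
  have hre : ∑ ε ∈ I.powerset, |S (tog ε)| = ∑ ε ∈ I.powerset, |S ε| := by
    apply Finset.sum_nbij' (i := tog) (j := tog) <;> intro a ha <;>
      simp [htog_mem a ha, htog_tog]
  have hdiff : ∀ ε, |S ε - S (tog ε)| = 2 * |b j| := by
    intro ε
    have : S ε - S (tog ε) = ∑ l ∈ I, (s ε l - s (tog ε) l) * b l := by
      rw [hS, ← Finset.sum_sub_distrib]; congr 1; ext l; ring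
    rw [this]
    have h2 : ∀ l ∈ I, l ≠ j → (s ε l - s (tog ε) l) * b l = 0 := by
      intro l _ hlj
      have : s (tog ε) l = s ε l := by
        by_cases h : j ∈ ε <;>
          simp only [hs, htog, h, if_true, if_false, Finset.mem_erase, Finset.mem_insert, hlj,
            ne_eq, not_false_eq_true, true_and, false_or]
      rw [this]; ring
    rw [Finset.sum_eq_single j h2 (fun h => absurd hj h)]
    have : |s ε j - s (tog ε) j| = 2 := by
      by_cases h : j ∈ ε <;> simp only [hs, htog, h, if_true, if_false]
      · rw [if_neg (Finset.notMem_erase j ε)]; norm_num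
      · rw [if_pos (Finset.mem_insert_self j ε)]; norm_num
    rw [abs_mul, this]
  have hcard : (I.powerset.card : ℝ) = 2 ^ I.card := by
    rw [Finset.card_powerset]; push_cast; ring
  have hmain : (2 ^ I.card : ℝ) * (2 * |b j|) ≤ 2 * ∑ ε ∈ I.powerset, |S ε| := by
    calc (2 ^ I.card : ℝ) * (2 * |b j|) = ∑ _ε ∈ I.powerset, 2 * |b j| := by
          rw [Finset.sum_const, nsmul_eq_mul, hcard]
      _ = ∑ ε ∈ I.powerset, |S ε - S (tog ε)| := by
          exact Finset.sum_congr rfl fun ε _ => (hdiff ε).symm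
      _ ≤ ∑ ε ∈ I.powerset, (|S ε| + |S (tog ε)|) :=
          Finset.sum_le_sum fun ε _ => abs_sub _ _
      _ = ∑ ε ∈ I.powerset, |S ε| + ∑ ε ∈ I.powerset, |S (tog ε)| := Finset.sum_add_distrib
      _ = 2 * ∑ ε ∈ I.powerset, |S ε| := by rw [hre]; ring
  have h2pos : (0:ℝ) < 2 ^ I.card := by positivity
  have hgoal : |b j| ≤ (2 ^ I.card : ℝ)⁻¹ * ∑ ε ∈ I.powerset, |S ε| := by
    rw [inv_mul_eq_div, le_div_iff₀' h2pos]
    linarith [hmain]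
  exact hgoal


lemma exists_exact_subset {n : ℕ} (hn : n ≠ 0) {A : Set (Fin n → ℝ)} (hA : MeasurableSet A)
    {z : Fin n → ℝ} {r : ℝ} (hr : 0 < r) (hAb : A ⊆ Metric.ball z r)
    {t : ℝ} (ht0 : 0 ≤ t) (ht : ENNReal.ofReal t ≤ volume A) :
    ∃ S : Set (Fin n → ℝ), S ⊆ A ∧ MeasurableSet S ∧ volume S = ENNReal.ofReal t := by
  classical
  have i₀ : Fin n := ⟨0, Nat.pos_of_ne_zero hn⟩
  have hAfin : volume A < ⊤ := by
    refine lt_of_le_of_lt (measure_mono hAb) ?_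
    rw [Real.volume_pi_ball z hr]
    exact ENNReal.ofReal_lt_top
  set H : ℝ → Set (Fin n → ℝ) := fun s => {x | x i₀ ≤ s} with hH
  have hHm : ∀ s, MeasurableSet (H s) := fun s =>
    measurableSet_le (measurable_pi_apply i₀) measurable_const
  set g : ℝ → ℝ := fun s => (volume (A ∩ H s)).toReal with hg
  have hfin : ∀ s, volume (A ∩ H s) ≠ ⊤ := fun s =>
    (lt_of_le_of_lt (measure_mono Set.inter_subset_left) hAfin).ne
  have hcoord : ∀ x ∈ A, ∀ i, x i ∈ Set.Ioo (z i - r) (z i + r) := by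
    intro x hx i
    have := lt_of_le_of_lt (dist_le_pi_dist x z i) (mem_ball.1 (hAb hx))
    rw [Real.dist_eq, abs_sub_lt_iff] at this
    constructor <;> linarith [this.1, this.2]
  set L : ℝ := (2 * r) ^ (n - 1) with hL
  have hLpos : 0 < L := by positivity
  -- slab estimate
  have hslab : ∀ a b : ℝ, a ≤ b → g b ≤ g a + L * (b - a) := by
    intro a b hab
    have hsub : A ∩ H b ⊆ (A ∩ H a) ∪ (A ∩ {x | a < x i₀ ∧ x i₀ ≤ b}) := by
      intro x hx
      rcases le_or_gt (x i₀) a with h | h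
      · exact Or.inl ⟨hx.1, h⟩
      · exact Or.inr ⟨hx.1, h, hx.2⟩
    have hbox : A ∩ {x | a < x i₀ ∧ x i₀ ≤ b} ⊆
        Set.pi Set.univ (fun i => if i = i₀ then Set.Ioc a b else Set.Ioo (z i - r) (z i + r)) := by
      intro x hx
      intro i _
      by_cases h : i = i₀ <;> simp only [h, if_true, if_false]
      · exact ⟨hx.2.1, hx.2.2⟩
      · exact hcoord x hx.1 i
    have hboxvol : volume (Set.pi Set.univ
        (fun i => if i = i₀ then Set.Ioc a b else Set.Ioo (z i - r) (z i + r))) =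
        ENNReal.ofReal (b - a) * ENNReal.ofReal (2 * r) ^ (n - 1) := by
      rw [volume_pi_pi]
      rw [Finset.prod_eq_mul_prod_sdiff_singleton_of_mem (Finset.mem_univ i₀)]
      rw [if_pos rfl, Real.volume_Ioc]
      congr 1
      have hterm : ∀ i ∈ Finset.univ \ {i₀},
          volume (if i = i₀ then Set.Ioc a b else Set.Ioo (z i - r) (z i + r)) =
            ENNReal.ofReal (2 * r) := by
        intro i hi
        rw [if_neg (by simpa using (Finset.mem_sdiff.1 hi).2), Real.volume_Ioo]
        congr 1; ring
      rw [Finset.prod_congr rfl hterm, Finset.prod_const,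
        Finset.card_sdiff_of_subset (Finset.singleton_subset_iff.2 (Finset.mem_univ i₀))]
      simp [Finset.card_univ]
    have h1 : volume (A ∩ H b) ≤ volume (A ∩ H a) + ENNReal.ofReal (L * (b - a)) := by
      refine (measure_mono hsub).trans ((measure_union_le _ _).trans ?_)
      gcongr
      refine (measure_mono hbox).trans ?_
      rw [hboxvol]
      refine le_of_eq ?_
      rw [← ENNReal.ofReal_pow (by positivity : (0:ℝ) ≤ 2 * r),
        ← ENNReal.ofReal_mul (by linarith : (0:ℝ) ≤ b - a)]
      congr 1
      rw [hL]; ring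
    rw [hg]
    have := ENNReal.toReal_mono (by
        refine ENNReal.add_ne_top.2 ⟨hfin a, ENNReal.ofReal_ne_top⟩) h1
    rw [ENNReal.toReal_add (hfin a) ENNReal.ofReal_ne_top, ENNReal.toReal_ofReal
      (by nlinarith)] at this
    simpa using this
  have hmono : Monotone g := by
    intro a b hab
    exact ENNReal.toReal_mono (hfin b) (measure_mono (Set.inter_subset_inter_right _
      (fun x hx => le_trans hx hab)))
  have hcont : Continuous g := by
    have : LipschitzWith (Real.toNNReal L) g := by
      apply LipschitzWith.of_dist_le_mul
      intro a b
      rw [Real.dist_eq, Real.dist_eq, Real.coe_toNNReal _ hLpos.le]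
      rcases le_total a b with h | h
      · rw [abs_of_nonpos (sub_nonpos.2 (hmono h)), abs_of_nonpos (by linarith)]
        have := hslab a b h
        linarith
      · rw [abs_of_nonneg (sub_nonneg.2 (hmono h)), abs_of_nonneg (by linarith)]
        have := hslab b a h
        linarith
    exact this.continuous
  have hg0 : g (z i₀ - r) = 0 := by
    have : A ∩ H (z i₀ - r) = ∅ := by
      ext x
      simp only [Set.mem_inter_iff, Set.mem_empty_iff_false, iff_false, not_and]
      intro hx
      have := (hcoord x hx i₀).1
      simp only [hH, Set.mem_setOf_eq]
      linarith
    rw [hg]; simp [this]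
  have hg1 : g (z i₀ + r) = (volume A).toReal := by
    have : A ∩ H (z i₀ + r) = A := by
      apply Set.inter_eq_self_of_subset_left
      intro x hx
      have := (hcoord x hx i₀).2
      simp only [hH, Set.mem_setOf_eq]
      linarith
    show (volume (A ∩ H (z i₀ + r))).toReal = _
    rw [this]
  have htle : t ≤ (volume A).toReal := by
    rw [← ENNReal.ofReal_le_iff_le_toReal hAfin.ne] at *
    exact ht
  obtain ⟨s, _, hgs⟩ := intermediate_value_Icc (by linarith : z i₀ - r ≤ z i₀ + r)
    hcont.continuousOn (by rw [hg0, hg1]; exact ⟨ht0, htle⟩)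
  refine ⟨A ∩ H s, Set.inter_subset_left, hA.inter (hHm s), ?_⟩
  rw [← hgs, hg]
  rw [ENNReal.ofReal_toReal (hfin s)]

lemma selection {n : ℕ} (hn : n ≠ 0) (x₀ : Fin n → ℝ) (z : ℕ → Fin n → ℝ) (ρ : ℕ → ℝ)
    (hρ : ∀ l, 0 < ρ l)
    (hdisj : Pairwise fun i j => Disjoint (Metric.ball (z i) (ρ i)) (Metric.ball (z j) (ρ j)))
    (I : Finset ℕ) :
    ∃ E : ℕ → Set (Fin n → ℝ), (∀ l, MeasurableSet (E l)) ∧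
      (∀ l ∈ I, E l ⊆ Metric.ball (z l + ρ l • x₀) (ρ l)) ∧
      (∀ l ∈ I, volume (E l) =
        ENNReal.ofReal ((2 * (3 + ‖x₀‖) ^ n)⁻¹ * (2 * ρ l) ^ n)) ∧
      (∀ l ∈ I, ∀ m ∈ I, l ≠ m → Disjoint (E l) (E m)) := by
  classical
  have hτ : 0 ≤ ‖x₀‖ := norm_nonneg _
  set δ : ℝ := (2 * (3 + ‖x₀‖) ^ n)⁻¹ with hδ
  have hΛ1 : (1:ℝ) ≤ (3 + ‖x₀‖) ^ n := by
    calc (1:ℝ) = 1 ^ n := (one_pow n).symm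
      _ ≤ (3 + ‖x₀‖) ^ n := pow_le_pow_left₀ (by norm_num) (by linarith) n
  have hδpos : 0 < δ := by rw [hδ]; positivity
  have hδΛ : δ * (3 + ‖x₀‖) ^ n = 1 / 2 := by
    rw [hδ]; field_simp
  induction I using Finset.strongInduction with
  | _ I IH =>
  rcases I.eq_empty_or_nonempty with rfl | hne
  · exact ⟨fun _ => ∅, fun _ => MeasurableSet.empty, by simp, by simp, by simp⟩
  obtain ⟨a, ha, hmax⟩ := I.exists_max_image ρ hne
  obtain ⟨E', hE'meas, hE'sub, hE'vol, hE'disj⟩ := IH (I.erase a) (I.erase_ssubset ha)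
  set Qp : ℕ → Set (Fin n → ℝ) := fun l => Metric.ball (z l + ρ l • x₀) (ρ l) with hQp
  set U : Set (Fin n → ℝ) := ⋃ j ∈ I.erase a, E' j with hU
  have hUmeas : MeasurableSet U := (I.erase a).measurableSet_biUnion (fun j _ => hE'meas j)
  set A : Set (Fin n → ℝ) := Qp a \ U with hA
  have hAmeas : MeasurableSet A := measurableSet_ball.diff hUmeas
  have hAsub : A ⊆ Qp a := Set.diff_subset
  -- the balls touched by earlier pieces
  set tch : Finset ℕ := (I.erase a).filter (fun j => ¬ Disjoint (E' j) (Qp a)) with htch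
  have hcover : Qp a ∩ U ⊆ ⋃ j ∈ tch, E' j := by
    intro x hx
    obtain ⟨hx1, hx2⟩ := hx
    simp only [hU, Set.mem_iUnion] at hx2
    obtain ⟨j, hj, hxj⟩ := hx2
    simp only [Set.mem_iUnion]
    exact ⟨j, Finset.mem_filter.2 ⟨hj, Set.not_disjoint_iff.2 ⟨x, hxj, hx1⟩⟩, hxj⟩
  have hballs_sub : ∀ j ∈ tch, Metric.ball (z j) (ρ j) ⊆
      Metric.ball (z a + ρ a • x₀) ((3 + ‖x₀‖) * ρ a) := by
    intro j hj y hy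
    simp only [htch, Finset.mem_filter] at hj
    obtain ⟨hjI, hjd⟩ := hj
    obtain ⟨x, hxE, hxQ⟩ := Set.not_disjoint_iff.1 hjd
    have hxQj : x ∈ Qp j := hE'sub j hjI hxE
    have hρj : ρ j ≤ ρ a := hmax j (Finset.mem_of_mem_erase hjI)
    have h1 : dist y (z j) < ρ j := mem_ball.1 hy
    have h2 : dist (z j) (z j + ρ j • x₀) = ρ j * ‖x₀‖ := by
      rw [dist_self_add_right, norm_smul, Real.norm_eq_abs, abs_of_pos (hρ j)]
    have h3 : dist (z j + ρ j • x₀) x < ρ j := by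
      rw [dist_comm]; exact mem_ball.1 hxQj
    have h4 : dist x (z a + ρ a • x₀) < ρ a := mem_ball.1 hxQ
    rw [mem_ball]
    have htri : dist y (z a + ρ a • x₀) ≤ dist y (z j) + (dist (z j) (z j + ρ j • x₀) +
        dist (z j + ρ j • x₀) x) + dist x (z a + ρ a • x₀) :=
      (dist_triangle4 y (z j) x (z a + ρ a • x₀)).trans (by
        gcongr
        exact dist_triangle _ _ _)
    calc dist y (z a + ρ a • x₀) ≤ dist y (z j) + (dist (z j) (z j + ρ j • x₀) +
          dist (z j + ρ j • x₀) x) + dist x (z a + ρ a • x₀) := htri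
      _ < ρ j + (ρ j * ‖x₀‖ + ρ j) + ρ a := by rw [h2]; linarith
      _ ≤ (3 + ‖x₀‖) * ρ a := by nlinarith [hρ j, (hρ j).le.trans hρj, hτ]
  have hclaim : volume (Qp a ∩ U) ≤ ENNReal.ofReal (δ * ((3 + ‖x₀‖) ^ n * (2 * ρ a) ^ n)) := by
    refine (measure_mono hcover).trans ((measure_biUnion_finset_le _ _).trans ?_)
    have heach : ∀ j ∈ tch, volume (E' j) =
        ENNReal.ofReal δ * volume (Metric.ball (z j) (ρ j)) := by
      intro j hj
      simp only [htch, Finset.mem_filter] at hj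
      rw [hE'vol j hj.1, Real.volume_pi_ball _ (hρ j), Fintype.card_fin,
        ← ENNReal.ofReal_mul hδpos.le]
    rw [Finset.sum_congr rfl heach, ← Finset.mul_sum]
    have hdisjtch : Set.Pairwise ↑tch (Function.onFun Disjoint
        (fun j => Metric.ball (z j) (ρ j))) := by
      intro i hi j hj hij
      exact hdisj hij
    rw [← measure_biUnion_finset hdisjtch (fun j _ => measurableSet_ball)]
    have hsub2 : (⋃ j ∈ tch, Metric.ball (z j) (ρ j)) ⊆
        Metric.ball (z a + ρ a • x₀) ((3 + ‖x₀‖) * ρ a) := Set.iUnion₂_subset hballs_sub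
    have this : volume (⋃ j ∈ tch, Metric.ball (z j) (ρ j)) ≤
        volume (Metric.ball (z a + ρ a • x₀) ((3 + ‖x₀‖) * ρ a)) := measure_mono hsub2
    refine le_trans (mul_le_mul_right this _) ?_
    rw [Real.volume_pi_ball _ (mul_pos (by positivity) (hρ a) : 0 < (3 + ‖x₀‖) * ρ a), Fintype.card_fin,
      ← ENNReal.ofReal_mul hδpos.le]
    refine ENNReal.ofReal_le_ofReal (le_of_eq ?_)
    congr 1
    rw [show 2 * ((3 + ‖x₀‖) * ρ a) = (3 + ‖x₀‖) * (2 * ρ a) by ring, mul_pow]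
  have hAvol : ENNReal.ofReal (δ * (2 * ρ a) ^ n) ≤ volume A := by
    have hQvol : volume (Qp a) = ENNReal.ofReal ((2 * ρ a) ^ n) := by
      rw [hQp, Real.volume_pi_ball _ (hρ a), Fintype.card_fin]
    have hdiffeq : volume A = volume (Qp a) - volume (Qp a ∩ U) := by
      rw [hA, ← Set.diff_self_inter]
      exact measure_diff Set.inter_subset_left (measurableSet_ball.inter hUmeas).nullMeasurableSet
        (lt_of_le_of_lt (measure_mono Set.inter_subset_left)
          (by rw [hQvol]; exact ENNReal.ofReal_lt_top)).ne
    rw [hdiffeq, hQvol]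
    have h1 : volume (Qp a ∩ U) ≤ ENNReal.ofReal ((2 * ρ a) ^ n / 2) := by
      refine hclaim.trans (ENNReal.ofReal_le_ofReal (le_of_eq ?_))
      rw [← mul_assoc, hδΛ]; ring
    refine le_trans ?_ (tsub_le_tsub_left h1 _)
    rw [← ENNReal.ofReal_sub _ (div_nonneg (pow_nonneg (by linarith [hρ a]) n) (by norm_num))]
    refine ENNReal.ofReal_le_ofReal ?_
    have hp : (0:ℝ) ≤ (2 * ρ a) ^ n := pow_nonneg (by linarith [hρ a]) n
    have hδhalf : δ ≤ 1/2 := by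
      have := hδΛ
      nlinarith
    nlinarith
  obtain ⟨S, hSsub, hSmeas, hSvol⟩ := exists_exact_subset hn hAmeas (hρ a)
    (hAsub.trans (by rw [hQp])) (mul_nonneg hδpos.le (pow_nonneg (by linarith [hρ a]) n)) hAvol
  refine ⟨fun l => if l = a then S else E' l, ?_, ?_, ?_, ?_⟩
  · intro l
    by_cases h : l = a <;> simp only [h, if_true, if_false]
    exacts [hSmeas, hE'meas l]
  · intro l hl
    by_cases h : l = a <;> simp only [h, if_true, if_false]
    · exact hSsub.trans hAsub
    · exact hE'sub l (Finset.mem_erase.2 ⟨h, hl⟩)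
  · intro l hl
    by_cases h : l = a <;> simp only [h, if_true, if_false]
    · rw [hSvol]
    · exact hE'vol l (Finset.mem_erase.2 ⟨h, hl⟩)
  · intro l hl m hm hlm
    have hSE : ∀ j ∈ I.erase a, Disjoint S (E' j) := by
      intro j hj
      rw [Set.disjoint_left]
      intro x hxS
      have hxA : x ∈ A := hSsub hxS
      intro hxj
      exact hxA.2 (Set.mem_biUnion hj hxj)
    by_cases h1 : l = a <;> by_cases h2 : m = a <;>
      simp only [h1, h2, if_true, if_false]
    · exact absurd (h1.trans h2.symm) hlm
    · exact hSE m (Finset.mem_erase.2 ⟨h2, hm⟩)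
    · exact (hSE l (Finset.mem_erase.2 ⟨h1, hl⟩)).symm
    · exact hE'disj l (Finset.mem_erase.2 ⟨h1, hl⟩) m (Finset.mem_erase.2 ⟨h2, hm⟩) hlm


section Helpers
open Set

variable {α : Type*} [MeasurableSpace α] {μ : MeasureTheory.Measure α}

lemma BLat.mem_mono (X : BLat α μ) {u v : α → ℝ} (hu : AEMeasurable u μ) (hv : X.Mem v)
    (h : ∀ x, |u x| ≤ |v x|) : X.Mem u ∧ X.nrm u ≤ X.nrm v := by
  have hm := X.ideal u v hu hv (Filter.Eventually.of_forall h)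
  exact ⟨hm, X.nrm_mono u v hm hv (Filter.Eventually.of_forall h)⟩

lemma BLat.mem_zero (X : BLat α μ) {w : α → ℝ} (hw : X.Mem w) :
    X.Mem (fun _ => (0:ℝ)) ∧ X.nrm (fun _ => (0:ℝ)) = 0 := by
  have h1 := X.smul_mem 0 w hw
  have h2 := X.nrm_smul 0 w
  have he : (fun x => (0:ℝ) * w x) = fun _ => (0:ℝ) := by funext x; ring
  rw [he] at h1 h2
  refine ⟨h1, ?_⟩
  simpa using h2

lemma BLat.mem_sum (X : BLat α μ) {w : α → ℝ} (hw : X.Mem w) {ι : Type*} (s : Finset ι)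
    (u : ι → α → ℝ) (h : ∀ i ∈ s, X.Mem (u i)) :
    X.Mem (fun x => ∑ i ∈ s, u i x) ∧
      X.nrm (fun x => ∑ i ∈ s, u i x) ≤ ∑ i ∈ s, X.nrm (u i) := by
  classical
  induction s using Finset.induction with
  | empty =>
    obtain ⟨hm, hn0⟩ := X.mem_zero hw
    constructor
    · simpa using hm
    · simpa using le_of_eq hn0
  | insert i s hni ih =>
    have hi := h i (Finset.mem_insert_self i s)
    have hs := ih (fun j hj => h j (Finset.mem_insert_of_mem hj))
    have he : (fun x => ∑ j ∈ insert i s, u j x) =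
        u i + fun x => ∑ j ∈ s, u j x := by
      funext x; simp [Finset.sum_insert hni]
    rw [he, Finset.sum_insert hni]
    exact ⟨X.add_mem _ _ hi hs.1,
      (X.nrm_triangle _ _ hi hs.1).trans (by linarith [hs.2])⟩

lemma BLat.mem_abs (X : BLat α μ) {u : α → ℝ} (hu : X.Mem u) :
    X.Mem (fun x => |u x|) ∧ X.nrm (fun x => |u x|) ≤ X.nrm u :=
  X.mem_mono ((X.aemeasurable_of_mem u hu).norm.congr (by
    filter_upwards with x using (Real.norm_eq_abs (u x)))) hu (fun x => by simp)

lemma BLat.mem_cmul (X : BLat α μ) {u : α → ℝ} (r : ℝ) (hu : X.Mem u) :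
    X.Mem (fun x => r * u x) ∧ X.nrm (fun x => r * u x) = |r| * X.nrm u :=
  ⟨X.smul_mem r u hu, X.nrm_smul r u⟩

end Helpers


lemma main_finite {n : ℕ} (hn : n ≠ 0) (X : BLat (En n) volume)
    (T : (En n → ℝ) → (En n → ℝ)) (hlin : IsLinearMap ℝ T)
    (x₀ : En n) (c C : ℝ) (hc : 0 < c) (hC : 0 < C)
    (hnd : NondegAlong T x₀ c)
    (hT : ∀ f, X.Mem f → X.Mem (T f) ∧ X.nrm (T f) ≤ C * X.nrm f)
    (z : ℕ → En n) (ρ : ℕ → ℝ) (hρ : ∀ l, 0 < ρ l)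
    (hdisj : Pairwise fun i j => Disjoint (Metric.ball (z i) (ρ i)) (Metric.ball (z j) (ρ j)))
    (φ : En n → ℝ) (hφ0 : ∀ x, 0 ≤ φ x) (hφint : Integrable φ volume) (hφmem : X.Mem φ)
    (I : Finset ℕ) :
    X.Mem (fun x => ∑ l ∈ I, ballAvg φ (z l) (ρ l) *
        Set.indicator (Metric.ball (z l) (ρ l)) (fun _ => (1:ℝ)) x) ∧
      X.nrm (fun x => ∑ l ∈ I, ballAvg φ (z l) (ρ l) *
        Set.indicator (Metric.ball (z l) (ρ l)) (fun _ => (1:ℝ)) x) ≤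
        (2 * (3 + ‖x₀‖) ^ n * C ^ 2 / c ^ 2) * X.nrm φ := by
  classical
  have hτ : 0 ≤ ‖x₀‖ := norm_nonneg _
  set δ : ℝ := (2 * (3 + ‖x₀‖) ^ n)⁻¹ with hδ
  have hΛ1 : (1:ℝ) ≤ (3 + ‖x₀‖) ^ n := by
    calc (1:ℝ) = 1 ^ n := (one_pow n).symm
      _ ≤ (3 + ‖x₀‖) ^ n := pow_le_pow_left₀ (by norm_num) (by linarith) n
  have hδpos : 0 < δ := by rw [hδ]; positivity
  set Q : ℕ → Set (En n) := fun l => Metric.ball (z l) (ρ l) with hQ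
  set Qp : ℕ → Set (En n) := fun l => Metric.ball (z l + ρ l • x₀) (ρ l) with hQp
  set a : ℕ → ℝ := fun l => ballAvg φ (z l) (ρ l) with ha
  have hvol : ∀ l, volume (Q l) = ENNReal.ofReal ((2 * ρ l) ^ n) := fun l => by
    rw [hQ]; rw [Real.volume_pi_ball _ (hρ l), Fintype.card_fin]
  have hvolp : ∀ l, volume (Qp l) = ENNReal.ofReal ((2 * ρ l) ^ n) := fun l => by
    rw [hQp]; rw [Real.volume_pi_ball _ (hρ l), Fintype.card_fin]
  have hpow_pos : ∀ l, (0:ℝ) < (2 * ρ l) ^ n := fun l => by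
    have := hρ l; positivity
  have ha0 : ∀ l, 0 ≤ a l := by
    intro l
    rw [ha]
    show 0 ≤ ballAvg φ (z l) (ρ l)
    rw [ballAvg, setAverage_eq, smul_eq_mul]
    exact mul_nonneg (by positivity)
      (setIntegral_nonneg measurableSet_ball (fun x _ => hφ0 x))
  -- the single-ball cutoffs
  set g : ℕ → En n → ℝ := fun l => (Q l).indicator φ with hg
  have hg0 : ∀ l x, 0 ≤ g l x := fun l x => Set.indicator_nonneg (fun y _ => hφ0 y) x
  have hgsupp : ∀ l x, x ∉ Q l → g l x = 0 := fun l x hx => Set.indicator_of_notMem hx _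
  have hgint : ∀ l, Integrable (g l) volume := fun l =>
    hφint.indicator measurableSet_ball
  have hgle : ∀ l x, |g l x| ≤ |φ x| := by
    intro l x
    by_cases hx : x ∈ Q l
    · rw [hg]; show |(Q l).indicator φ x| ≤ _; rw [Set.indicator_of_mem hx]
    · rw [hg]; show |(Q l).indicator φ x| ≤ _; rw [Set.indicator_of_notMem hx]
      simp [abs_nonneg]
  have hgmem : ∀ l, X.Mem (g l) := by
    intro l
    exact (X.mem_mono ((X.aemeasurable_of_mem φ hφmem).indicator measurableSet_ball)
      hφmem (hgle l)).1
  have hgavg : ∀ l, ballAvg (g l) (z l) (ρ l) = a l := by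
    intro l
    show ⨍ y in Metric.ball (z l) (ρ l), (Q l).indicator φ y = ballAvg φ (z l) (ρ l)
    rw [ballAvg, setAverage_eq, setAverage_eq,
      setIntegral_indicator measurableSet_ball]
    have h2 : Metric.ball (z l) (ρ l) ∩ Q l = Metric.ball (z l) (ρ l) := by
      show Metric.ball (z l) (ρ l) ∩ Metric.ball (z l) (ρ l) = _
      exact Set.inter_self _
    rw [h2]
  have hnd1 : ∀ l, ∀ x ∈ Qp l, c * a l ≤ |T (g l) x| := by
    intro l x hx
    have := hnd (z l) (ρ l) (hρ l) (g l) (hg0 l) ((hgint l).locallyIntegrable)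
      (hgsupp l) x (Or.inl hx)
    rwa [hgavg l] at this
  -- the selection of disjoint representatives
  obtain ⟨E, hEmeas, hEsub, hEvol, hEdisj⟩ := selection hn x₀ z ρ hρ hdisj I
  set hf : ℕ → En n → ℝ := fun l => fun x => a l * Set.indicator (E l) (fun _ => (1:ℝ)) x
    with hhf
  have hhf0 : ∀ l x, 0 ≤ hf l x :=
    fun l x => mul_nonneg (ha0 l) (Set.indicator_nonneg (fun _ _ => zero_le_one) x)
  have hhfsupp : ∀ l ∈ I, ∀ x, x ∉ Qp l → hf l x = 0 := by
    intro l hl x hx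
    show a l * Set.indicator (E l) (fun _ => (1:ℝ)) x = 0
    rw [Set.indicator_of_notMem (fun hxE => hx (hEsub l hl hxE)), mul_zero]
  have hhfint : ∀ l ∈ I, Integrable (hf l) volume := by
    intro l hl
    refine Integrable.const_mul ?_ (a l)
    rw [integrable_indicator_iff (hEmeas l)]
    refine integrableOn_const ?_
    rw [hEvol l hl]
    exact ENNReal.ofReal_ne_top
  have hhfavg : ∀ l ∈ I, ballAvg (hf l) (z l + ρ l • x₀) (ρ l) = δ * a l := by
    intro l hl
    rw [ballAvg, setAverage_eq]
    have h1 : ∫ y in Metric.ball (z l + ρ l • x₀) (ρ l), hf l y =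
        a l * (δ * (2 * ρ l) ^ n) := by
      show ∫ y in Metric.ball (z l + ρ l • x₀) (ρ l),
        a l * Set.indicator (E l) (fun _ => (1:ℝ)) y = _
      rw [MeasureTheory.integral_const_mul, setIntegral_indicator (hEmeas l)]
      have h2 : Metric.ball (z l + ρ l • x₀) (ρ l) ∩ E l = E l :=
        Set.inter_eq_self_of_subset_right (hEsub l hl)
      rw [h2, setIntegral_const, measureReal_def, hEvol l hl, smul_eq_mul, mul_one,
        ENNReal.toReal_ofReal (mul_nonneg hδpos.le (hpow_pos l).le)]
    rw [h1, smul_eq_mul]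
    have h3 : (volume (Metric.ball (z l + ρ l • x₀) (ρ l))).toReal = (2 * ρ l) ^ n := by
      have := hvolp l
      rw [hQp] at this
      simp only at this
      rw [this, ENNReal.toReal_ofReal (hpow_pos l).le]
    rw [measureReal_def, h3]
    rw [show ((2 * ρ l) ^ n)⁻¹ * (a l * (δ * (2 * ρ l) ^ n)) =
      (δ * a l) * (((2 * ρ l) ^ n)⁻¹ * (2 * ρ l) ^ n) by ring,
      inv_mul_cancel₀ (hpow_pos l).ne', mul_one]
  have hnd2 : ∀ l ∈ I, ∀ x ∈ Q l, c * (δ * a l) ≤ |T (hf l) x| := by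
    intro l hl x hx
    have hx' : x ∈ Metric.ball ((z l + ρ l • x₀) - ρ l • x₀) (ρ l) := by
      rwa [add_sub_cancel_right]
    have := hnd (z l + ρ l • x₀) (ρ l) (hρ l) (hf l) (hhf0 l)
      ((hhfint l hl).locallyIntegrable) (hhfsupp l hl) x (Or.inr hx')
    rwa [hhfavg l hl] at this
  -- the pointwise key inequality using the sign trick and linearity
  have key : ∀ (u : ℕ → En n → ℝ), ∀ j ∈ I, ∀ x : En n,
      |T (u j) x| ≤ (2 ^ I.card : ℝ)⁻¹ *
        ∑ ε ∈ I.powerset, |T (∑ l ∈ I, (if l ∈ ε then (1:ℝ) else -1) • u l) x| := by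
    intro u j hj x
    have hb := key_sign I (fun l => T (u l) x) hj
    refine hb.trans (le_of_eq ?_)
    congr 1
    refine Finset.sum_congr rfl (fun ε _ => ?_)
    congr 1
    have hTlin : T (∑ l ∈ I, (if l ∈ ε then (1:ℝ) else -1) • u l) =
        ∑ l ∈ I, (if l ∈ ε then (1:ℝ) else -1) • T (u l) := by
      have h0 : T (∑ l ∈ I, (if l ∈ ε then (1:ℝ) else -1) • u l) =
          (IsLinearMap.mk' T hlin) (∑ l ∈ I, (if l ∈ ε then (1:ℝ) else -1) • u l) := rfl
      rw [h0, map_sum]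
      refine Finset.sum_congr rfl (fun l _ => ?_)
      rw [LinearMap.map_smul]
      rfl
    rw [hTlin, Finset.sum_apply]
    refine Finset.sum_congr rfl (fun l _ => ?_)
    rw [Pi.smul_apply, smul_eq_mul]
  -- membership/norm block for the averaged absolute sums
  have norm_block : ∀ (u : ℕ → En n → ℝ) (G : En n → ℝ),
      (∀ l ∈ I, X.Mem (u l)) → X.Mem G →
      (∀ ε ∈ I.powerset, ∀ x : En n,
        |(∑ l ∈ I, (if l ∈ ε then (1:ℝ) else -1) • u l) x| ≤ |G x|) →
      X.Mem (fun x => (2 ^ I.card : ℝ)⁻¹ *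
          ∑ ε ∈ I.powerset, |T (∑ l ∈ I, (if l ∈ ε then (1:ℝ) else -1) • u l) x|) ∧
        X.nrm (fun x => (2 ^ I.card : ℝ)⁻¹ *
          ∑ ε ∈ I.powerset, |T (∑ l ∈ I, (if l ∈ ε then (1:ℝ) else -1) • u l) x|) ≤
          C * X.nrm G := by
    intro u G hu hG hbound
    have hGs : ∀ ε ∈ I.powerset, X.Mem (∑ l ∈ I, (if l ∈ ε then (1:ℝ) else -1) • u l) ∧
        X.nrm (∑ l ∈ I, (if l ∈ ε then (1:ℝ) else -1) • u l) ≤ X.nrm G := by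
      intro ε hε
      have hfs : (∑ l ∈ I, (if l ∈ ε then (1:ℝ) else -1) • u l) =
          (fun x => ∑ l ∈ I, (if l ∈ ε then (1:ℝ) else -1) * u l x) := by
        funext x
        rw [Finset.sum_apply]
        exact Finset.sum_congr rfl (fun l _ => by rw [Pi.smul_apply, smul_eq_mul])
      have hmem : X.Mem (∑ l ∈ I, (if l ∈ ε then (1:ℝ) else -1) • u l) := by
        rw [hfs]
        exact (X.mem_sum hφmem I _ (fun l hl => (X.mem_cmul _ (hu l hl)).1)).1
      refine ⟨hmem, ?_⟩
      exact (X.mem_mono (X.aemeasurable_of_mem _ hmem) hG (fun x => hbound ε hε x)).2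
    have habs : ∀ ε ∈ I.powerset,
        X.Mem (fun x => |T (∑ l ∈ I, (if l ∈ ε then (1:ℝ) else -1) • u l) x|) ∧
        X.nrm (fun x => |T (∑ l ∈ I, (if l ∈ ε then (1:ℝ) else -1) • u l) x|) ≤
          C * X.nrm G := by
      intro ε hε
      obtain ⟨hm, hnm⟩ := hGs ε hε
      obtain ⟨hTm, hTn⟩ := hT _ hm
      obtain ⟨h1, h2⟩ := X.mem_abs hTm
      refine ⟨h1, h2.trans (hTn.trans ?_)⟩
      exact mul_le_mul_of_nonneg_left hnm hC.le
    obtain ⟨hsm, hsn⟩ := X.mem_sum hφmem I.powerset _ (fun ε hε => (habs ε hε).1)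
    obtain ⟨hcm, hcn⟩ := X.mem_cmul ((2 ^ I.card : ℝ)⁻¹) hsm
    refine ⟨hcm, ?_⟩
    rw [hcn, abs_of_pos (by positivity)]
    calc (2 ^ I.card : ℝ)⁻¹ * X.nrm (fun x => ∑ ε ∈ I.powerset,
          |T (∑ l ∈ I, (if l ∈ ε then (1:ℝ) else -1) • u l) x|) ≤
        (2 ^ I.card : ℝ)⁻¹ * ∑ ε ∈ I.powerset, (C * X.nrm G) := by
          refine mul_le_mul_of_nonneg_left (hsn.trans ?_) (by positivity)
          exact Finset.sum_le_sum (fun ε hε => (habs ε hε).2)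
      _ = C * X.nrm G := by
          rw [Finset.sum_const, Finset.card_powerset, nsmul_eq_mul]
          push_cast
          rw [← mul_assoc, inv_mul_cancel₀ (by positivity), one_mul]
  -- step 1: control of the disjoint representative function
  set G₂ : En n → ℝ := fun x => ∑ l ∈ I, hf l x with hG₂
  set Hg : En n → ℝ := fun x => (2 ^ I.card : ℝ)⁻¹ *
      ∑ ε ∈ I.powerset, |T (∑ l ∈ I, (if l ∈ ε then (1:ℝ) else -1) • g l) x| with hHg
  have hHg_nonneg : ∀ x, 0 ≤ Hg x := by
    intro x
    exact mul_nonneg (by positivity) (Finset.sum_nonneg (fun ε _ => abs_nonneg _))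
  obtain ⟨hHgmem, hHgnrm⟩ := norm_block g φ (fun l _ => hgmem l) hφmem (by
    intro ε hε x
    have hfs : (∑ l ∈ I, (if l ∈ ε then (1:ℝ) else -1) • g l) x =
        ∑ l ∈ I, (if l ∈ ε then (1:ℝ) else -1) * g l x := by
      rw [Finset.sum_apply]
      exact Finset.sum_congr rfl (fun l _ => by rw [Pi.smul_apply, smul_eq_mul])
    rw [hfs]
    by_cases hx : ∃ l₀ ∈ I, x ∈ Q l₀
    · obtain ⟨l₀, hl₀, hxl₀⟩ := hx
      rw [Finset.sum_eq_single l₀ (fun l hl hne => ?_) (fun h => absurd hl₀ h)]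
      · have : g l₀ x = φ x := by
          rw [hg]; exact Set.indicator_of_mem hxl₀ φ
        rw [this, abs_mul]
        have : |if l₀ ∈ ε then (1:ℝ) else -1| = 1 := by
          by_cases h : l₀ ∈ ε <;> simp [h]
        rw [this, one_mul]
      · have hxl : x ∉ Q l := by
          intro hxl
          exact (Set.disjoint_left.1 (hdisj hne)) hxl hxl₀
        rw [hgsupp l x hxl, mul_zero]
    · push_neg at hx
      rw [Finset.sum_eq_zero (fun l hl => ?_)]
      · simpa using abs_nonneg (φ x)
      · rw [hgsupp l x (hx l hl), mul_zero]
    )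
  have hG₂bound : ∀ x, |G₂ x| ≤ |c⁻¹ * Hg x| := by
    intro x
    have hG₂0 : 0 ≤ G₂ x := Finset.sum_nonneg (fun l _ => hhf0 l x)
    rw [abs_of_nonneg hG₂0, abs_of_nonneg (mul_nonneg (by positivity) (hHg_nonneg x))]
    by_cases hx : ∃ l₀ ∈ I, x ∈ E l₀
    · obtain ⟨l₀, hl₀, hxl₀⟩ := hx
      have hsum : G₂ x = hf l₀ x := by
        show ∑ l ∈ I, hf l x = hf l₀ x
        refine Finset.sum_eq_single l₀ (fun l hl hne => ?_) (fun h => absurd hl₀ h)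
        show a l * Set.indicator (E l) (fun _ => (1:ℝ)) x = 0
        rw [Set.indicator_of_notMem (fun hxE =>
          (Set.disjoint_left.1 (hEdisj l hl l₀ hl₀ hne)) hxE hxl₀), mul_zero]
      have hval : hf l₀ x = a l₀ := by
        show a l₀ * Set.indicator (E l₀) (fun _ => (1:ℝ)) x = a l₀
        rw [Set.indicator_of_mem hxl₀, mul_one]
      rw [hsum, hval]
      have h1 : c * a l₀ ≤ |T (g l₀) x| := hnd1 l₀ x (hEsub l₀ hl₀ hxl₀)
      have h2 := key g l₀ hl₀ x
      have h3 : c * a l₀ ≤ Hg x := by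
        show c * a l₀ ≤ (2 ^ I.card : ℝ)⁻¹ * ∑ ε ∈ I.powerset,
          |T (∑ l ∈ I, (if l ∈ ε then (1:ℝ) else -1) • g l) x|
        exact h1.trans h2
      calc a l₀ = c⁻¹ * (c * a l₀) := by field_simp
        _ ≤ c⁻¹ * Hg x := mul_le_mul_of_nonneg_left h3 (by positivity)
    · push_neg at hx
      have hsum : G₂ x = 0 := by
        show ∑ l ∈ I, hf l x = 0
        refine Finset.sum_eq_zero (fun l hl => ?_)
        show a l * Set.indicator (E l) (fun _ => (1:ℝ)) x = 0
        rw [Set.indicator_of_notMem (hx l hl), mul_zero]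
      rw [hsum]
      exact mul_nonneg (by positivity) (hHg_nonneg x)
  have hG₂meas : Measurable G₂ := by
    refine Finset.measurable_sum I (fun l _ => ?_)
    exact (measurable_const.indicator (hEmeas l)).const_mul (a l)
  have hG₂memX : X.Mem G₂ ∧ X.nrm G₂ ≤ c⁻¹ * (C * X.nrm φ) := by
    have hc' := (X.mem_cmul c⁻¹ hHgmem)
    obtain ⟨hm, hle⟩ := X.mem_mono hG₂meas.aemeasurable hc'.1 hG₂bound
    refine ⟨hm, hle.trans ?_⟩
    rw [hc'.2, abs_of_pos (by positivity)]
    exact mul_le_mul_of_nonneg_left hHgnrm (by positivity)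
  -- step 2: control of the averaging function itself
  have hhfmem : ∀ l ∈ I, X.Mem (hf l) := by
    intro l hl
    refine (X.mem_mono ?_ hG₂memX.1 ?_).1
    · exact ((measurable_const.indicator (hEmeas l)).const_mul (a l)).aemeasurable
    · intro x
      rw [abs_of_nonneg (hhf0 l x), abs_of_nonneg (Finset.sum_nonneg (fun j _ => hhf0 j x))]
      exact Finset.single_le_sum (fun j _ => hhf0 j x) hl
  set Hh : En n → ℝ := fun x => (2 ^ I.card : ℝ)⁻¹ *
      ∑ ε ∈ I.powerset, |T (∑ l ∈ I, (if l ∈ ε then (1:ℝ) else -1) • hf l) x| with hHh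
  have hHh_nonneg : ∀ x, 0 ≤ Hh x := by
    intro x
    exact mul_nonneg (by positivity) (Finset.sum_nonneg (fun ε _ => abs_nonneg _))
  obtain ⟨hHhmem, hHhnrm⟩ := norm_block hf G₂ hhfmem hG₂memX.1 (by
    intro ε hε x
    have hfs : (∑ l ∈ I, (if l ∈ ε then (1:ℝ) else -1) • hf l) x =
        ∑ l ∈ I, (if l ∈ ε then (1:ℝ) else -1) * hf l x := by
      rw [Finset.sum_apply]
      exact Finset.sum_congr rfl (fun l _ => by rw [Pi.smul_apply, smul_eq_mul])
    rw [hfs]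
    have h1 : |∑ l ∈ I, (if l ∈ ε then (1:ℝ) else -1) * hf l x| ≤
        ∑ l ∈ I, |(if l ∈ ε then (1:ℝ) else -1) * hf l x| := Finset.abs_sum_le_sum_abs _ _
    have h2 : ∀ l ∈ I, |(if l ∈ ε then (1:ℝ) else -1) * hf l x| = hf l x := by
      intro l hl
      rw [abs_mul]
      have : |if l ∈ ε then (1:ℝ) else -1| = 1 := by
        by_cases h : l ∈ ε <;> simp [h]
      rw [this, one_mul, abs_of_nonneg (hhf0 l x)]
    rw [Finset.sum_congr rfl h2] at h1
    refine h1.trans ?_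
    have h4 : (0:ℝ) ≤ G₂ x := Finset.sum_nonneg (fun l _ => hhf0 l x)
    rw [abs_of_nonneg h4]
    )
  -- final assembly
  set A : En n → ℝ := fun x => ∑ l ∈ I, a l *
      Set.indicator (Metric.ball (z l) (ρ l)) (fun _ => (1:ℝ)) x with hA
  have hAbound : ∀ x, |A x| ≤ |(c * δ)⁻¹ * Hh x| := by
    intro x
    have hA0 : 0 ≤ A x :=
      Finset.sum_nonneg (fun l _ => mul_nonneg (ha0 l)
        (Set.indicator_nonneg (fun _ _ => zero_le_one) x))
    rw [abs_of_nonneg hA0, abs_of_nonneg (mul_nonneg (by positivity) (hHh_nonneg x))]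
    by_cases hx : ∃ l₀ ∈ I, x ∈ Q l₀
    · obtain ⟨l₀, hl₀, hxl₀⟩ := hx
      have hsum : A x = a l₀ := by
        show ∑ l ∈ I, a l * Set.indicator (Metric.ball (z l) (ρ l)) (fun _ => (1:ℝ)) x = a l₀
        have hstep : ∀ l ∈ I, l ≠ l₀ →
            a l * Set.indicator (Metric.ball (z l) (ρ l)) (fun _ => (1:ℝ)) x = 0 := by
          intro l hl hne
          have hxl : x ∉ Metric.ball (z l) (ρ l) := by
            intro hxl
            exact (Set.disjoint_left.1 (hdisj hne)) hxl hxl₀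
          rw [Set.indicator_of_notMem hxl, mul_zero]
        rw [Finset.sum_eq_single l₀ hstep (fun h => absurd hl₀ h),
          Set.indicator_of_mem (show x ∈ Metric.ball (z l₀) (ρ l₀) from hxl₀), mul_one]
      rw [hsum]
      have h1 : c * (δ * a l₀) ≤ |T (hf l₀) x| := hnd2 l₀ hl₀ x hxl₀
      have h2 := key hf l₀ hl₀ x
      have h3 : c * (δ * a l₀) ≤ Hh x := by
        show c * (δ * a l₀) ≤ (2 ^ I.card : ℝ)⁻¹ * ∑ ε ∈ I.powerset,
          |T (∑ l ∈ I, (if l ∈ ε then (1:ℝ) else -1) • hf l) x|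
        exact h1.trans h2
      calc a l₀ = (c * δ)⁻¹ * (c * (δ * a l₀)) := by field_simp
        _ ≤ (c * δ)⁻¹ * Hh x := mul_le_mul_of_nonneg_left h3 (by positivity)
    · push_neg at hx
      have hsum : A x = 0 := by
        show ∑ l ∈ I, a l * Set.indicator (Metric.ball (z l) (ρ l)) (fun _ => (1:ℝ)) x = 0
        refine Finset.sum_eq_zero (fun l hl => ?_)
        have hxl : x ∉ Metric.ball (z l) (ρ l) := hx l hl
        rw [Set.indicator_of_notMem hxl, mul_zero]
      rw [hsum]
      exact mul_nonneg (by positivity) (hHh_nonneg x)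
  have hAmeas : Measurable A := by
    refine Finset.measurable_sum I (fun l _ => ?_)
    exact (measurable_const.indicator measurableSet_ball).const_mul (a l)
  have hfinal : X.Mem A ∧ X.nrm A ≤ (c * δ)⁻¹ * (C * (c⁻¹ * (C * X.nrm φ))) := by
    have hc' := X.mem_cmul (c * δ)⁻¹ hHhmem
    obtain ⟨hm, hle⟩ := X.mem_mono hAmeas.aemeasurable hc'.1 hAbound
    refine ⟨hm, hle.trans ?_⟩
    rw [hc'.2, abs_of_pos (by positivity)]
    refine mul_le_mul_of_nonneg_left (hHhnrm.trans ?_) (by positivity)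
    exact mul_le_mul_of_nonneg_left hG₂memX.2 hC.le
  have hconst : (c * δ)⁻¹ * (C * (c⁻¹ * (C * X.nrm φ))) =
      (2 * (3 + ‖x₀‖) ^ n * C ^ 2 / c ^ 2) * X.nrm φ := by
    rw [hδ]
    field_simp
  rw [hconst] at hfinal
  exact hfinal


lemma avgop_eval_mem {n : ℕ} (z : ℕ → En n) (ρ : ℕ → ℝ)
    (hdisj : Pairwise fun i j => Disjoint (Metric.ball (z i) (ρ i)) (Metric.ball (z j) (ρ j)))
    (w : En n → ℝ) {x : En n} {l₀ : ℕ} (hx : x ∈ Metric.ball (z l₀) (ρ l₀)) :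
    AvgOp z ρ w x = ballAvg w (z l₀) (ρ l₀) := by
  rw [AvgOp]
  rw [tsum_eq_single l₀ (fun b hb => ?_)]
  · rw [Set.indicator_of_mem hx, mul_one]
  · have hxb : x ∉ Metric.ball (z b) (ρ b) := fun hxb =>
      (Set.disjoint_left.1 (hdisj hb)) hxb hx
    rw [Set.indicator_of_notMem hxb, mul_zero]

lemma avgop_eval_zero {n : ℕ} (z : ℕ → En n) (ρ : ℕ → ℝ) (w : En n → ℝ) {x : En n}
    (hx : ∀ l, x ∉ Metric.ball (z l) (ρ l)) : AvgOp z ρ w x = 0 := by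
  rw [AvgOp]
  have h : (fun l => ballAvg w (z l) (ρ l) *
      Set.indicator (Metric.ball (z l) (ρ l)) (fun _ => (1:ℝ)) x) = fun _ => 0 := by
    funext l; rw [Set.indicator_of_notMem (hx l), mul_zero]
  rw [h, tsum_zero]

lemma avgop_meas {n : ℕ} (z : ℕ → En n) (ρ : ℕ → ℝ)
    (hdisj : Pairwise fun i j => Disjoint (Metric.ball (z i) (ρ i)) (Metric.ball (z j) (ρ j)))
    (w : En n → ℝ) : Measurable (AvgOp z ρ w) := by
  have hm : ∀ m : ℕ, Measurable (fun x => ∑ l ∈ Finset.range m,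
      ballAvg w (z l) (ρ l) * Set.indicator (Metric.ball (z l) (ρ l)) (fun _ => (1:ℝ)) x) :=
    fun m => Finset.measurable_sum _ (fun l _ =>
      (measurable_const.indicator measurableSet_ball).const_mul _)
  refine measurable_of_tendsto_metrizable hm (tendsto_pi_nhds.2 (fun x => ?_))
  by_cases hx : ∃ l₀, x ∈ Metric.ball (z l₀) (ρ l₀)
  · obtain ⟨l₀, hxl₀⟩ := hx
    rw [avgop_eval_mem z ρ hdisj w hxl₀]
    refine tendsto_atTop_of_eventually_const (i₀ := l₀ + 1) (fun m hm' => ?_)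
    have hstep : ∀ l ∈ Finset.range m, l ≠ l₀ →
        ballAvg w (z l) (ρ l) * Set.indicator (Metric.ball (z l) (ρ l)) (fun _ => (1:ℝ)) x
          = 0 := by
      intro l _ hne
      have hxb : x ∉ Metric.ball (z l) (ρ l) := fun hxb =>
        (Set.disjoint_left.1 (hdisj hne)) hxb hxl₀
      rw [Set.indicator_of_notMem hxb, mul_zero]
    rw [Finset.sum_eq_single l₀ hstep
      (fun h => absurd (Finset.mem_range.2 (lt_of_lt_of_le (Nat.lt_succ_self l₀) hm')) h)]
    rw [Set.indicator_of_mem hxl₀, mul_one]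
  · push_neg at hx
    rw [avgop_eval_zero z ρ w hx]
    refine tendsto_atTop_of_eventually_const (i₀ := 0) (fun m _ => ?_)
    exact Finset.sum_eq_zero fun l _ => by rw [Set.indicator_of_notMem (hx l), mul_zero]

/-- If a linear operator `T`, nondegenerate along a direction, is bounded on a Banach
lattice `X` on `ℝⁿ` with the Fatou property, then the averaging operators `A_S` over
pairwise disjoint collections `S` of balls are uniformly bounded on `X` (with a bound
independent of `S`). -/
theorem stmt15 (n : ℕ) (X : BLat (En n) volume)
    (hFat : FatouRaw volume X.Mem X.nrm)
    (T : (En n → ℝ) → (En n → ℝ)) (hlin : IsLinearMap ℝ T)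
    (x₀ : En n) (c C : ℝ) (hc : 0 < c) (hC : 0 < C)
    (hnd : NondegAlong T x₀ c)
    (hT : ∀ f, X.Mem f → X.Mem (T f) ∧ X.nrm (T f) ≤ C * X.nrm f) :
    ∃ c_a : ℝ, ∀ (z : ℕ → En n) (ρ : ℕ → ℝ), (∀ l, 0 < ρ l) →
      (Pairwise fun i j => Disjoint (Metric.ball (z i) (ρ i)) (Metric.ball (z j) (ρ j))) →
      ∀ f, X.Mem f → X.Mem (AvgOp z ρ f) ∧ X.nrm (AvgOp z ρ f) ≤ c_a * X.nrm f := by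
  classical
  refine ⟨2 * (3 + ‖x₀‖) ^ n * C ^ 2 / c ^ 2, ?_⟩
  intro z ρ hρ hdisj f hf
  by_cases hn : n = 0
  · exfalso
    subst hn
    have h01 : Disjoint (Metric.ball (z 0) (ρ 0)) (Metric.ball (z 1) (ρ 1)) :=
      hdisj (by norm_num)
    have he : z 0 = z 1 := funext fun i => i.elim0
    have h0 : z 0 ∈ Metric.ball (z 0) (ρ 0) := mem_ball_self (hρ 0)
    have h1 : z 0 ∈ Metric.ball (z 1) (ρ 1) := by
      rw [he]; exact mem_ball_self (hρ 1)
    exact Set.disjoint_left.1 h01 h0 h1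
  -- the nondegenerate case
  have hfae := X.aemeasurable_of_mem f hf
  set ca : ℝ := 2 * (3 + ‖x₀‖) ^ n * C ^ 2 / c ^ 2 with hca
  have hca0 : 0 ≤ ca := by positivity
  set Fabs : En n → ℝ := fun x => |f x| with hFabs
  have hFabsae : AEMeasurable Fabs volume := by
    refine hfae.norm.congr ?_
    filter_upwards with x using (Real.norm_eq_abs (f x))
  -- truncations
  set φ : ℕ → En n → ℝ := fun j =>
    Set.indicator (Metric.ball (0 : En n) j) (fun y => min |f y| (j : ℝ)) with hφdef
  have hφ0 : ∀ j x, 0 ≤ φ j x := by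
    intro j x
    exact Set.indicator_nonneg (fun y _ => le_min (abs_nonneg _) (Nat.cast_nonneg j)) x
  have hφmeas : ∀ j, AEMeasurable (φ j) volume := by
    intro j
    exact (hFabsae.min aemeasurable_const).indicator measurableSet_ball
  have hφle : ∀ j x, |φ j x| ≤ |f x| := by
    intro j x
    by_cases hx : x ∈ Metric.ball (0 : En n) j
    · show |Set.indicator _ _ x| ≤ _
      rw [Set.indicator_of_mem hx]
      rw [abs_of_nonneg (le_min (abs_nonneg _) (Nat.cast_nonneg j))]
      exact min_le_left _ _
    · show |Set.indicator _ _ x| ≤ _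
      rw [Set.indicator_of_notMem hx]
      simp
  have hφint : ∀ j, Integrable (φ j) volume := by
    intro j
    have hbint : Integrable
        (Set.indicator (Metric.ball (0 : En n) j) (fun _ => (j : ℝ))) volume := by
      rw [integrable_indicator_iff measurableSet_ball]
      exact integrableOn_const measure_ball_lt_top.ne
    refine hbint.mono' (hφmeas j).aestronglyMeasurable
      (Filter.Eventually.of_forall fun x => ?_)
    by_cases hx : x ∈ Metric.ball (0 : En n) j
    · show ‖Set.indicator _ _ x‖ ≤ _
      rw [Set.indicator_of_mem hx, Set.indicator_of_mem hx, Real.norm_eq_abs,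
        abs_of_nonneg (le_min (abs_nonneg _) (Nat.cast_nonneg j))]
      exact min_le_right _ _
    · show ‖Set.indicator _ _ x‖ ≤ _
      rw [Set.indicator_of_notMem hx, Set.indicator_of_notMem hx]
      simp
  have hφmem : ∀ j, X.Mem (φ j) ∧ X.nrm (φ j) ≤ X.nrm f := by
    intro j
    exact X.mem_mono (hφmeas j) hf (hφle j)
  have hφmono : ∀ x, Monotone fun j => φ j x := by
    intro x j k hjk
    by_cases hx : x ∈ Metric.ball (0 : En n) j
    · have hx' : x ∈ Metric.ball (0 : En n) k :=
        mem_ball.2 ((mem_ball.1 hx).trans_le (Nat.cast_le.2 hjk))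
      show Set.indicator _ _ x ≤ Set.indicator _ _ x
      rw [Set.indicator_of_mem hx, Set.indicator_of_mem hx']
      exact min_le_min (le_refl _) (Nat.cast_le.2 hjk)
    · show Set.indicator _ _ x ≤ Set.indicator _ _ x
      rw [Set.indicator_of_notMem hx]
      exact hφ0 k x
  have hφtend : ∀ x, Tendsto (fun j => φ j x) atTop (𝓝 (Fabs x)) := by
    intro x
    obtain ⟨N, hN⟩ := exists_nat_gt (max (dist x 0) |f x|)
    refine tendsto_atTop_of_eventually_const (i₀ := N) (fun j hj => ?_)
    have hxj : x ∈ Metric.ball (0 : En n) j := by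
      rw [mem_ball]
      calc dist x 0 ≤ max (dist x 0) |f x| := le_max_left _ _
        _ < N := hN
        _ ≤ j := Nat.cast_le.2 hj
    show Set.indicator _ _ x = |f x|
    rw [Set.indicator_of_mem hxj]
    refine min_eq_left ?_
    calc |f x| ≤ max (dist x 0) |f x| := le_max_right _ _
      _ ≤ N := hN.le
      _ ≤ j := Nat.cast_le.2 hj
  -- the index sets
  set P : ℕ → Prop := fun l => IntegrableOn Fabs (Metric.ball (z l) (ρ l)) volume with hP
  set Idx : ℕ → Finset ℕ := fun j => (Finset.range j).filter P with hIdx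
  set F : ℕ → En n → ℝ := fun j x => ∑ l ∈ Idx j, ballAvg (φ j) (z l) (ρ l) *
      Set.indicator (Metric.ball (z l) (ρ l)) (fun _ => (1:ℝ)) x with hFdef
  have hFj : ∀ j, X.Mem (F j) ∧ X.nrm (F j) ≤ ca * X.nrm f := by
    intro j
    obtain ⟨hm, hnr⟩ := main_finite hn X T hlin x₀ c C hc hC hnd hT z ρ hρ hdisj
      (φ j) (hφ0 j) (hφint j) (hφmem j).1 (Idx j)
    refine ⟨hm, hnr.trans ?_⟩
    rw [hca]
    exact mul_le_mul_of_nonneg_left (hφmem j).2 (by positivity)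
  set A' : En n → ℝ := AvgOp z ρ Fabs with hA'
  -- pointwise convergence of F j to A'
  have hconv : ∀ x, Tendsto (fun j => F j x) atTop (𝓝 (A' x)) := by
    intro x
    by_cases hx : ∃ l₀, x ∈ Metric.ball (z l₀) (ρ l₀)
    · obtain ⟨l₀, hxl₀⟩ := hx
      have hA'x : A' x = ballAvg Fabs (z l₀) (ρ l₀) := avgop_eval_mem z ρ hdisj Fabs hxl₀
      rw [hA'x]
      have hstep : ∀ j, ∀ l ∈ Idx j, l ≠ l₀ →
          ballAvg (φ j) (z l) (ρ l) *
            Set.indicator (Metric.ball (z l) (ρ l)) (fun _ => (1:ℝ)) x = 0 := by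
        intro j l _ hne
        have hxb : x ∉ Metric.ball (z l) (ρ l) := fun hxb =>
          (Set.disjoint_left.1 (hdisj hne)) hxb hxl₀
        rw [Set.indicator_of_notMem hxb, mul_zero]
      by_cases hPl : P l₀
      · -- the average converges by monotone convergence
        have hmct := integral_tendsto_of_tendsto_of_monotone
          (μ := volume.restrict (Metric.ball (z l₀) (ρ l₀))) (f := fun j => φ j) (F := Fabs)
          (fun j => (hφint j).integrableOn) hPl
          (Filter.Eventually.of_forall fun y => hφmono y)
          (Filter.Eventually.of_forall fun y => hφtend y)
        have havg : Tendsto (fun j => ballAvg (φ j) (z l₀) (ρ l₀)) atTop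
            (𝓝 (ballAvg Fabs (z l₀) (ρ l₀))) := by
          have h2 := hmct.const_mul ((volume (Metric.ball (z l₀) (ρ l₀))).toReal⁻¹)
          simpa only [ballAvg, setAverage_eq, smul_eq_mul, mul_comm, measureReal_def] using h2
        refine Tendsto.congr' ?_ havg
        rw [Filter.eventuallyEq_iff_exists_mem]
        refine ⟨{j | l₀ + 1 ≤ j}, Filter.mem_atTop (l₀ + 1), fun j hj => ?_⟩
        have hl₀mem : l₀ ∈ Idx j := by
          simp only [hIdx, Finset.mem_filter, Finset.mem_range]
          exact ⟨lt_of_lt_of_le (Nat.lt_succ_self l₀) hj, hPl⟩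
        show ballAvg (φ j) (z l₀) (ρ l₀) = F j x
        rw [hFdef]
        simp only
        rw [Finset.sum_eq_single l₀ (hstep j) (fun h => absurd hl₀mem h),
          Set.indicator_of_mem hxl₀, mul_one]
      · -- junk values: both sides vanish
        have hz : ballAvg Fabs (z l₀) (ρ l₀) = 0 := by
          rw [ballAvg, setAverage_eq, integral_undef hPl, smul_zero]
        rw [hz]
        have hFz : ∀ j, F j x = 0 := by
          intro j
          rw [hFdef]
          simp only
          refine Finset.sum_eq_zero (fun l hl => ?_)
          have hne : l ≠ l₀ := by
            intro h
            subst h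
            simp only [hIdx, Finset.mem_filter] at hl
            exact hPl hl.2
          exact hstep j l hl hne
        refine tendsto_atTop_of_eventually_const (i₀ := 0) (fun j _ => hFz j)
    · push_neg at hx
      have hA'x : A' x = 0 := avgop_eval_zero z ρ Fabs hx
      rw [hA'x]
      have hFz : ∀ j, F j x = 0 := by
        intro j
        rw [hFdef]
        simp only
        exact Finset.sum_eq_zero fun l _ => by
          rw [Set.indicator_of_notMem (hx l), mul_zero]
      refine tendsto_atTop_of_eventually_const (i₀ := 0) (fun j _ => hFz j)
  -- Fatou argument
  have hA'memnrm : X.Mem A' ∧ X.nrm A' ≤ ca * X.nrm f := by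
    have hFatall : ∀ ε : ℝ, 0 < ε → X.Mem A' ∧ X.nrm A' ≤ ca * X.nrm f + ε := by
      intro ε hε
      set α : ℝ := ca * X.nrm f + ε with hα
      have hαpos : 0 < α := by
        have := X.nrm_nonneg f
        rw [hα]
        nlinarith
      have happ := hFat (fun j x => α⁻¹ * F j x) (fun x => α⁻¹ * A' x)
        (fun j => (X.mem_cmul α⁻¹ (hFj j).1).1)
        (by
          intro j
          rw [(X.mem_cmul α⁻¹ (hFj j).1).2, abs_of_pos (by positivity)]
          rw [inv_mul_le_iff₀ hαpos, mul_one]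
          refine (hFj j).2.trans ?_
          rw [hα]
          linarith)
        (Filter.Eventually.of_forall fun x => (hconv x).const_mul α⁻¹)
      obtain ⟨hm, hn1⟩ := happ
      have hback : (fun x => α * (α⁻¹ * A' x)) = A' := by
        funext x
        rw [← mul_assoc, mul_inv_cancel₀ hαpos.ne', one_mul]
      constructor
      · have := X.smul_mem α _ hm
        rwa [hback] at this
      · have h2 := X.nrm_smul α (fun x => α⁻¹ * A' x)
        rw [hback, abs_of_pos hαpos] at h2
        rw [h2]
        calc α * X.nrm (fun x => α⁻¹ * A' x) ≤ α * 1 :=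
              mul_le_mul_of_nonneg_left hn1 hαpos.le
          _ = ca * X.nrm f + ε := by rw [mul_one, hα]
    refine ⟨(hFatall 1 one_pos).1, ?_⟩
    refine le_of_forall_pos_le_add (fun ε hε => (hFatall ε hε).2)
  -- transfer from |f| to f
  have hptle : ∀ x, |AvgOp z ρ f x| ≤ |A' x| := by
    intro x
    by_cases hx : ∃ l₀, x ∈ Metric.ball (z l₀) (ρ l₀)
    · obtain ⟨l₀, hxl₀⟩ := hx
      rw [avgop_eval_mem z ρ hdisj f hxl₀, hA', avgop_eval_mem z ρ hdisj Fabs hxl₀]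
      have h1 : |ballAvg f (z l₀) (ρ l₀)| ≤ ballAvg Fabs (z l₀) (ρ l₀) := by
        rw [ballAvg, ballAvg, setAverage_eq, setAverage_eq, smul_eq_mul, smul_eq_mul,
          abs_mul, abs_of_nonneg (inv_nonneg.2 measureReal_nonneg)]
        refine mul_le_mul_of_nonneg_left ?_ (inv_nonneg.2 ENNReal.toReal_nonneg)
        have h2 := norm_integral_le_integral_norm
          (μ := volume.restrict (Metric.ball (z l₀) (ρ l₀))) f
        rw [Real.norm_eq_abs] at h2
        refine h2.trans (le_of_eq ?_)
        refine integral_congr_ae (Filter.Eventually.of_forall fun y => ?_)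
        exact Real.norm_eq_abs (f y)
      exact h1.trans (le_abs_self _)
    · push_neg at hx
      rw [avgop_eval_zero z ρ f hx, hA', avgop_eval_zero z ρ Fabs hx]
  obtain ⟨hmem, hle⟩ := X.mem_mono (avgop_meas z ρ hdisj f).aemeasurable hA'memnrm.1 hptle
  exact ⟨hmem, hle.trans hA'memnrm.2⟩
end
end
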